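/- For every integer k ≥ 2, the cubic polynomial x³ - (2k+4)x² + (k+4)x - 1 is irreducible over ℚ, is not reciprocal, and its largest real root is a Pisot unit (hence a bi-Perron unit). -/

import Mathlib

open Polynomial

def IsReciprocal {R : Type*} [Semiring R] (p : Polynomial R) : Prop :=
  ∀ i ≤ p.natDegree, p.coeff i = p.coeff (p.natDegree - i)

lemma quad_aux (K α t : ℝ) (hK : 2 ≤ K) (hα1 : 1 < α)
    (hα : α^3 - (2*K+4)*α^2 + (K+4)*α - 1 = 0)
    (ht : t^3 - (2*K+4)*t^2 + (K+4)*t - 1 = 0) (hne : t ≠ α) :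
    0 < t ∧ t < 1 ∧ 1 < t * α := by
  have hα0 : 0 < α := by linarith
  have hfact : (t - α) * (α*t^2 - α*((2*K+4)-α)*t + 1) = 0 := by
    linear_combination α*ht - t*hα
  have hq : α*t^2 - α*((2*K+4)-α)*t + 1 = 0 :=
    (mul_eq_zero.mp hfact).resolve_left (sub_ne_zero.mpr hne)
  set γ : ℝ := (2*K+4) - α - t with hγ
  have hprod : α * (t * γ) = 1 := by rw [hγ]; linear_combination -hq
  have htpos : 0 < t := by nlinarith [sq_nonneg t, sq_nonneg (t-1), sq_nonneg (t+1)]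
  have hγpos : 0 < γ := by nlinarith [mul_pos hα0 htpos]
  have hone : (α - 1) * (α + 1 - α*((2*K+4)-α)) = K * α := by linear_combination hα
  have h2 : (α - 1) * (α * ((1-t)*(1-γ))) = K * α := by
    linear_combination hone + (α-1)*hprod - (α-1)*α*hγ
  have h3 : 0 < (α - 1) * (α * ((1-t)*(1-γ))) := by
    rw [h2]; exact mul_pos (by linarith) hα0
  have h4 : 0 < α * ((1-t)*(1-γ)) := by nlinarith
  have hq1 : 0 < (1 - t) * (1 - γ) := by nlinarith
  have ht1 : t < 1 := by
    by_contra h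
    push_neg at h
    have hat : 1 < α * t := by nlinarith
    have hγ1 : γ < 1 := by nlinarith [mul_pos hα0 htpos]
    nlinarith
  have hγlt : γ < 1 := by
    by_contra h
    push_neg at h
    nlinarith
  refine ⟨htpos, ht1, ?_⟩
  nlinarith [mul_pos htpos hα0]

set_option maxHeartbeats 1600000 in
theorem stmt16 (k : ℤ) (hk : 2 ≤ k) :
    Irreducible ((X ^ 3 - C ((2*k+4 : ℤ) : ℚ) * X ^ 2 + C ((k+4 : ℤ) : ℚ) * X - 1)) ∧
    ¬ IsReciprocal (X ^ 3 - C ((2*k+4 : ℤ) : ℚ) * X ^ 2 + C ((k+4 : ℤ) : ℚ) * X - 1) ∧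
    ∃ α : ℝ,
      (Polynomial.aeval α) (X ^ 3 - C ((2*k+4 : ℤ) : ℚ) * X ^ 2 + C ((k+4 : ℤ) : ℚ) * X - 1) = 0 ∧
      (∀ β : ℝ, (Polynomial.aeval β)
          (X ^ 3 - C ((2*k+4 : ℤ) : ℚ) * X ^ 2 + C ((k+4 : ℤ) : ℚ) * X - 1) = 0 → β ≤ α) ∧
      1 < α ∧ IsIntegral ℤ α ∧ IsIntegral ℤ α⁻¹ ∧
      (∀ β : ℂ, (Polynomial.aeval β)
          (X ^ 3 - C ((2*k+4 : ℤ) : ℚ) * X ^ 2 + C ((k+4 : ℤ) : ℚ) * X - 1) = 0 →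
        β ≠ (α : ℂ) → ‖β‖ < 1) ∧
      (∀ β : ℂ, (Polynomial.aeval β)
          (X ^ 3 - C ((2*k+4 : ℤ) : ℚ) * X ^ 2 + C ((k+4 : ℤ) : ℚ) * X - 1) = 0 →
        β ≠ (α : ℂ) → α⁻¹ ≤ ‖β‖ ∧ ‖β‖ < α) := by
  have hdeg : (X ^ 3 - C ((2*k+4 : ℤ) : ℚ) * X ^ 2 + C ((k+4 : ℤ) : ℚ) * X - 1).natDegree = 3 := by
    compute_degree!
  refine ⟨?_, ?_, ?_⟩
  · -- Irreducible
    rw [irreducible_iff_roots_eq_zero_of_degree_le_three (by rw [hdeg]; norm_num) (by rw [hdeg])]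
    rw [Multiset.eq_zero_iff_forall_notMem]
    intro r hr
    rw [mem_roots'] at hr
    obtain ⟨-, hr⟩ := hr
    rw [IsRoot.def] at hr
    simp only [eval_sub, eval_add, eval_mul, eval_pow, eval_X, eval_C, eval_one] at hr
    have haev : aeval r (X ^ 3 - C (2*k+4 : ℤ) * X ^ 2 + C (k+4 : ℤ) * X - 1 : ℤ[X]) = 0 := by
      simp only [map_sub, map_add, map_mul, map_pow, aeval_X, aeval_C, map_one]
      simp only [algebraMap_int_eq, eq_intCast]
      push_cast at hr ⊢
      linear_combination hr
    obtain ⟨r', hr', hdvd⟩ := exists_integer_of_is_root_of_monic (by monicity!) haev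
    have hc0 : (X ^ 3 - C (2*k+4 : ℤ) * X ^ 2 + C (k+4 : ℤ) * X - 1 : ℤ[X]).coeff 0 = -1 := by
      simp [coeff_one]
    rw [hc0] at hdvd
    have hu : r' = 1 ∨ r' = -1 := Int.isUnit_iff.mp (isUnit_of_dvd_one (dvd_neg.mp hdvd))
    have hre : (r' : ℚ)^3 - ((2*k+4 : ℤ):ℚ)*(r':ℚ)^2 + ((k+4:ℤ):ℚ)*(r':ℚ) - 1 = 0 := by
      rw [hr'] at hr
      simp only [algebraMap_int_eq, eq_intCast] at hr
      push_cast at hr ⊢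
      linear_combination hr
    have hz : r'^3 - (2*k+4)*r'^2 + (k+4)*r' - 1 = 0 := by exact_mod_cast hre
    rcases hu with h | h <;> rw [h] at hz <;> omega
  · -- not reciprocal
    intro h
    have h0 := h 0 (by rw [hdeg]; norm_num)
    have hc0 : (X ^ 3 - C ((2*k+4 : ℤ) : ℚ) * X ^ 2 + C ((k+4 : ℤ) : ℚ) * X - 1).coeff 0 = -1 := by
      simp [coeff_one]
    have hc3 : (X ^ 3 - C ((2*k+4 : ℤ) : ℚ) * X ^ 2 + C ((k+4 : ℤ) : ℚ) * X - 1).coeff 3 = 1 := by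
      have hm : (X ^ 3 - C ((2*k+4 : ℤ) : ℚ) * X ^ 2 + C ((k+4 : ℤ) : ℚ) * X - 1).Monic := by
        monicity!
      have := hm.coeff_natDegree
      rwa [hdeg] at this
    rw [hdeg, Nat.sub_zero, hc0, hc3] at h0
    norm_num at h0
  · -- the Pisot root
    have hk' : (2:ℝ) ≤ (k:ℝ) := by exact_mod_cast hk
    have hfin : {x : ℝ | x^3 - (2*(k:ℝ)+4)*x^2 + ((k:ℝ)+4)*x - 1 = 0}.Finite := by
      have hne0 : (X ^ 3 - C (2*(k:ℝ)+4) * X ^ 2 + C ((k:ℝ)+4) * X - 1 : ℝ[X]) ≠ 0 := by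
        intro h
        have : (X ^ 3 - C (2*(k:ℝ)+4) * X ^ 2 + C ((k:ℝ)+4) * X - 1 : ℝ[X]).natDegree = 3 := by
          compute_degree!
        rw [h] at this
        simp at this
      have := finite_setOf_isRoot hne0
      convert this using 1
      ext x
      simp [IsRoot]
    have hcont : Continuous (fun x : ℝ => x^3 - (2*(k:ℝ)+4)*x^2 + ((k:ℝ)+4)*x - 1) := by
      fun_prop
    have hf1 : (fun x : ℝ => x^3 - (2*(k:ℝ)+4)*x^2 + ((k:ℝ)+4)*x - 1) 1 = -(k:ℝ) := by
      ring
    have hfA : (fun x : ℝ => x^3 - (2*(k:ℝ)+4)*x^2 + ((k:ℝ)+4)*x - 1) (2*(k:ℝ)+4)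
        = ((k:ℝ)+4)*(2*(k:ℝ)+4) - 1 := by
      ring
    obtain ⟨r, hrmem, hr0⟩ : ∃ r ∈ Set.Icc (1:ℝ) (2*(k:ℝ)+4),
        r^3 - (2*(k:ℝ)+4)*r^2 + ((k:ℝ)+4)*r - 1 = 0 := by
      have hsub := intermediate_value_Icc (by linarith : (1:ℝ) ≤ 2*(k:ℝ)+4) hcont.continuousOn
      have h0mem : (0:ℝ) ∈ Set.Icc ((fun x : ℝ => x^3 - (2*(k:ℝ)+4)*x^2 + ((k:ℝ)+4)*x - 1) 1)
          ((fun x : ℝ => x^3 - (2*(k:ℝ)+4)*x^2 + ((k:ℝ)+4)*x - 1) (2*(k:ℝ)+4)) := by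
        rw [hf1, hfA]
        constructor <;> nlinarith
      obtain ⟨r, hr1, hr2⟩ := hsub h0mem
      exact ⟨r, hr1, hr2⟩
    obtain ⟨α, hαroot, hmax⟩ : ∃ a : ℝ, (a^3 - (2*(k:ℝ)+4)*a^2 + ((k:ℝ)+4)*a - 1 = 0) ∧
        ∀ β : ℝ, β^3 - (2*(k:ℝ)+4)*β^2 + ((k:ℝ)+4)*β - 1 = 0 → β ≤ a := by
      have hSne : hfin.toFinset.Nonempty := ⟨r, (hfin.mem_toFinset).mpr hr0⟩
      refine ⟨hfin.toFinset.max' hSne, (hfin.mem_toFinset).mp (hfin.toFinset.max'_mem hSne), ?_⟩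
      intro β hβ
      exact hfin.toFinset.le_max' β ((hfin.mem_toFinset).mpr hβ)
    have hα1 : 1 < α := by
      have hrα : r ≤ α := hmax r hr0
      have : r ≠ 1 := by
        intro h
        rw [h] at hr0
        nlinarith
      rcases hrmem with ⟨h1, -⟩
      rcases lt_of_le_of_ne h1 (Ne.symm this) with h
      linarith
    have hα0 : 0 < α := by linarith
    have key : ∀ β : ℂ, β^3 - (2*(k:ℂ)+4)*β^2 + ((k:ℂ)+4)*β - 1 = 0 → β ≠ (α : ℂ) →
        α⁻¹ ≤ ‖β‖ ∧ ‖β‖ < 1 := by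
      intro β hβ hne
      have hαC : (α:ℂ)^3 - (2*(k:ℂ)+4)*(α:ℂ)^2 + ((k:ℂ)+4)*(α:ℂ) - 1 = 0 := by
        exact_mod_cast congrArg (fun x : ℝ => (x : ℂ)) hαroot
      by_cases him : β.im = 0
      · -- real root
        have hβre : β = ((β.re : ℝ) : ℂ) := by
          apply Complex.ext <;> simp [him]
        have htroot : β.re^3 - (2*(k:ℝ)+4)*β.re^2 + ((k:ℝ)+4)*β.re - 1 = 0 := by
          rw [hβre] at hβ
          exact_mod_cast hβ
        have htne : β.re ≠ α := fun h => hne (by rw [hβre, h])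
        obtain ⟨h1, h2, h3⟩ := quad_aux (k:ℝ) α β.re hk' hα1 hαroot htroot htne
        have hnorm : ‖β‖ = β.re := by
          conv_lhs => rw [hβre]
          rw [Complex.norm_real, Real.norm_eq_abs]
          exact abs_of_pos h1
        rw [hnorm]
        refine ⟨?_, h2⟩
        rw [inv_eq_one_div, div_le_iff₀ hα0]
        linarith
      · -- complex conjugate pair
        have hfact : (β - (α:ℂ)) * ((α:ℂ)*β^2 - (α:ℂ)*((2*(k:ℂ)+4) - (α:ℂ))*β + 1) = 0 := by
          linear_combination (α:ℂ)*hβ - β*hαC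
        have hq : (α:ℂ)*β^2 - (α:ℂ)*((2*(k:ℂ)+4) - (α:ℂ))*β + 1 = 0 :=
          (mul_eq_zero.mp hfact).resolve_left (sub_ne_zero.mpr hne)
        have hqc := congrArg (starRingEnd ℂ) hq
        simp only [map_sub, map_add, map_mul, map_pow, map_one, map_zero, map_ofNat,
          map_intCast, Complex.conj_ofReal] at hqc
        have hcne : β ≠ (starRingEnd ℂ) β := by
          intro h
          apply him
          have := Complex.conj_eq_iff_im.mp h.symm
          exact this
        have hsum : (α:ℂ)*(β + (starRingEnd ℂ) β) - (α:ℂ)*((2*(k:ℂ)+4) - (α:ℂ)) = 0 := by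
          have hs : (β - (starRingEnd ℂ) β) *
              ((α:ℂ)*(β + (starRingEnd ℂ) β) - (α:ℂ)*((2*(k:ℂ)+4) - (α:ℂ))) = 0 := by
            linear_combination hq - hqc
          exact (mul_eq_zero.mp hs).resolve_left (sub_ne_zero.mpr hcne)
        have hprodC : (α:ℂ) * (β * (starRingEnd ℂ) β) = 1 := by
          linear_combination β*hsum - hq
        rw [Complex.mul_conj] at hprodC
        have hns : α * Complex.normSq β = 1 := by exact_mod_cast hprodC
        have hn0 : 0 ≤ ‖β‖ := norm_nonneg β
        have hsq : ‖β‖^2 = Complex.normSq β := by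
          rw [Complex.sq_norm]
        have h5 : ‖β‖^2 * α = 1 := by rw [hsq]; linarith [hns]
        have h6 : (‖β‖*α)^2 = α := by
          calc (‖β‖*α)^2 = (‖β‖^2*α)*α := by ring
          _ = 1*α := by rw [h5]
          _ = α := one_mul α
        have hlt1 : ‖β‖ < 1 := by
          have hsq1 : ‖β‖^2 < 1 := by nlinarith
          nlinarith
        refine ⟨?_, hlt1⟩
        rw [inv_eq_one_div, div_le_iff₀ hα0]
        nlinarith [mul_nonneg hn0 (le_of_lt hα0)]
    refine ⟨α, ?_, ?_, hα1, ?_, ?_, ?_, ?_⟩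
    · simp only [map_sub, map_add, map_mul, map_pow, aeval_X, aeval_C, map_one]
      simp only [eq_ratCast]
      push_cast
      linear_combination hαroot
    · intro β hβ
      simp only [map_sub, map_add, map_mul, map_pow, aeval_X, aeval_C, map_one] at hβ
      simp only [eq_ratCast] at hβ
      push_cast at hβ
      exact hmax β (by linear_combination hβ)
    · refine ⟨X ^ 3 - C (2*k+4 : ℤ) * X ^ 2 + C (k+4 : ℤ) * X - 1, by monicity!, ?_⟩
      rw [← aeval_def]
      simp only [map_sub, map_add, map_mul, map_pow, aeval_X, aeval_C, map_one]
      simp only [algebraMap_int_eq, eq_intCast]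
      push_cast
      linear_combination hαroot
    · refine ⟨X ^ 3 - C (k+4 : ℤ) * X ^ 2 + C (2*k+4 : ℤ) * X - 1, by monicity!, ?_⟩
      rw [← aeval_def]
      simp only [map_sub, map_add, map_mul, map_pow, aeval_X, aeval_C, map_one]
      simp only [algebraMap_int_eq, eq_intCast]
      push_cast
      have hαne : α ≠ 0 := ne_of_gt hα0
      have e : α * α⁻¹ = 1 := mul_inv_cancel₀ hαne
      linear_combination (-(α⁻¹^3)) * hαroot +
        ((α^2*α⁻¹^2 + α*α⁻¹ + 1) + ((k:ℝ)+4)*α⁻¹^2 - (2*(k:ℝ)+4)*α⁻¹*(α*α⁻¹+1)) * e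
    · intro β hβ hne
      simp only [map_sub, map_add, map_mul, map_pow, aeval_X, aeval_C, map_one] at hβ
      simp only [eq_ratCast] at hβ
      push_cast at hβ
      exact (key β (by linear_combination hβ) hne).2
    · intro β hβ hne
      simp only [map_sub, map_add, map_mul, map_pow, aeval_X, aeval_C, map_one] at hβ
      simp only [eq_ratCast] at hβ
      push_cast at hβ
      obtain ⟨hl, hu⟩ := key β (by linear_combination hβ) hne
      exact ⟨hl, lt_trans hu hα1⟩
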